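/- Assume: (i) all corner concentration values of all cells are strictly positive; (ii) α > max{u₁⁺, u₂⁺, 0} over all Gauss points of all interior edges and Δt/Δx + Δt/Δy ≤ (1/6)·min{Φ_m/α, B₁, B₂}, where Φ_m is the minimum of Φ over all mesh corners, B₁ = min over interior vertical-edge Gauss points and both signs of Φ_{i+1/2,j±1/2}/(α − u₁⁺_{i+1/2,j,β}), B₂ the analogous horizontal-edge minimum; (iii) all D₁₁ values lie in [0, D₁₁^M], all D₂₂ values in [0, D₂₂^M], all |D₁₂| values are ≤ D₁₂^M, all |D₂₁| values ≤ D₂₁^M, α̃ ≥ (Δy/(2Δx))·D₁₁^M + √3·D₁₂^M, α̃ ≥ (Δx/(2Δy))·D₂₂^M + √3·D₂₁^M, D₁₁^M·Λ₁ + 2(α̃ + D₁₂^M)·λ < Φ_m/12, and D₂₂^M·Λ₂ + 2(α̃ + D₂₁^M)·λ < Φ_m/12; (iv) z₁ ≥ 0 and for every cell and every (β,γ): 6Δt·z₁·max{P^{βγ}, 0} ≤ 1, if q^{βγ} ≥ 0 then c̃^{βγ} ≥ 0, and if q^{βγ} < 0 then c̃^{βγ} = c(x_i^β, y_j^γ)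 and 6Δt(−q^{βγ}) < Φ^m_{ij}, the minimum of Φ over the four corners of K_{ij}. Then the Euler-forward cell-average update r̄^{new}_{ij} = H^c_{ij} + H^d_{x,ij} + H^d_{y,ij} + H^s_{ij} is strictly positive for every interior cell (2 ≤ i ≤ N_x−1, 2 ≤ j ≤ N_y−1). -/

import Mathlib

noncomputable section

namespace DG2D
set_option maxHeartbeats 2000000

/-- Gauss constant `μ₁ = (3+√3)/6`. -/
def mu1 : ℝ := (3 + Real.sqrt 3) / 6

/-- Gauss constant `μ₂ = (3-√3)/6`. -/
def mu2 : ℝ := (3 - Real.sqrt 3) / 6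

/-- Value at the Gauss point `β` of an edge, from the two endpoint (corner) values:
`β = 1` gives `μ₁·a + μ₂·b`, `β = 2` gives `μ₂·a + μ₁·b`. -/
def ga (β : Fin 2) (a b : ℝ) : ℝ := if β = 0 then mu1 * a + mu2 * b else mu2 * a + mu1 * b

/-- Cell average `r̄_{ij} = (1/4)·∑ cΦ` over the four corners of `K_{ij}`.
`Φ i j` denotes the corner value `Φ_{i+1/2,j+1/2}`; `c00 i j`, `c10 i j`, `c01 i j`,
`c11 i j` denote the corner values of `c` in cell `K_{ij}` at the corners
`(i-1/2,j-1/2)`, `(i+1/2,j-1/2)`, `(i-1/2,j+1/2)`, `(i+1/2,j+1/2)` respectively. -/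
def rbar (Φ c00 c10 c01 c11 : ℕ → ℕ → ℝ) (i j : ℕ) : ℝ :=
  (c00 i j * Φ (i - 1) (j - 1) + c10 i j * Φ i (j - 1)
    + c01 i j * Φ (i - 1) j + c11 i j * Φ i j) / 4

/-- Trace `c⁻` (from `K_{ij}`) at Gauss point `β` of the vertical edge `x_{i+1/2}`, row `j`. -/
def cmV (c10 c11 : ℕ → ℕ → ℝ) (i j : ℕ) (β : Fin 2) : ℝ := ga β (c10 i j) (c11 i j)

/-- Trace `c⁺` (from `K_{i+1,j}`) at Gauss point `β` of the vertical edge `x_{i+1/2}`, row `j`. -/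
def cpV (c00 c01 : ℕ → ℕ → ℝ) (i j : ℕ) (β : Fin 2) : ℝ := ga β (c00 (i + 1) j) (c01 (i + 1) j)

/-- Trace `c⁻` (from `K_{ij}`) at Gauss point `β` of the horizontal edge `y_{j+1/2}`, column `i`. -/
def cmH (c01 c11 : ℕ → ℕ → ℝ) (i j : ℕ) (β : Fin 2) : ℝ := ga β (c01 i j) (c11 i j)

/-- Trace `c⁺` (from `K_{i,j+1}`) at Gauss point `β` of the horizontal edge `y_{j+1/2}`. -/
def cpH (c00 c10 : ℕ → ℕ → ℝ) (i j : ℕ) (β : Fin 2) : ℝ := ga β (c00 i (j + 1)) (c10 i (j + 1))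

/-- Jump `[c] = c⁺ - c⁻` at a vertical-edge Gauss point. -/
def jumpV (c00 c10 c01 c11 : ℕ → ℕ → ℝ) (i j : ℕ) (β : Fin 2) : ℝ :=
  cpV c00 c01 i j β - cmV c10 c11 i j β

/-- Jump `[c] = c⁺ - c⁻` at a horizontal-edge Gauss point. -/
def jumpH (c00 c10 c01 c11 : ℕ → ℕ → ℝ) (i j : ℕ) (β : Fin 2) : ℝ :=
  cpH c00 c10 i j β - cmH c01 c11 i j β

/-- Convective flux `û₁c = u₁⁺·c⁺ - α·[c]` at vertical-edge Gauss points. -/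
def uc1 (u1 : ℕ → ℕ → Fin 2 → ℝ) (c00 c10 c01 c11 : ℕ → ℕ → ℝ) (α : ℝ)
    (i j : ℕ) (β : Fin 2) : ℝ :=
  u1 i j β * cpV c00 c01 i j β - α * (cpV c00 c01 i j β - cmV c10 c11 i j β)

/-- Convective flux `û₂c = u₂⁺·c⁺ - α·[c]` at horizontal-edge Gauss points. -/
def uc2 (u2 : ℕ → ℕ → Fin 2 → ℝ) (c00 c10 c01 c11 : ℕ → ℕ → ℝ) (α : ℝ)
    (i j : ℕ) (β : Fin 2) : ℝ :=
  u2 i j β * cpH c00 c10 i j β - α * (cpH c00 c10 i j β - cmH c01 c11 i j β)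

/-- Convection part `H^c_{ij}`. -/
def Hc (u1 u2 : ℕ → ℕ → Fin 2 → ℝ) (Φ c00 c10 c01 c11 : ℕ → ℕ → ℝ) (α Δx Δy Δt : ℝ)
    (i j : ℕ) : ℝ :=
  rbar Φ c00 c10 c01 c11 i j / 3
    + (Δt / Δx) * ∑ β : Fin 2, (1 / 2 : ℝ) *
        (uc1 u1 c00 c10 c01 c11 α (i - 1) j β - uc1 u1 c00 c10 c01 c11 α i j β)
    + (Δt / Δy) * ∑ β : Fin 2, (1 / 2 : ℝ) *
        (uc2 u2 c00 c10 c01 c11 α i (j - 1) β - uc2 u2 c00 c10 c01 c11 α i j β)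

/-- Derivative trace `(c_x)⁻` at a vertical-edge Gauss point:
`(c_x)⁻_{i+1/2,β} = (c⁻_{i+1/2,β} - c⁺_{i-1/2,β})/Δx`. -/
def cxmV (c00 c10 c01 c11 : ℕ → ℕ → ℝ) (Δx : ℝ) (i j : ℕ) (β : Fin 2) : ℝ :=
  (cmV c10 c11 i j β - cpV c00 c01 (i - 1) j β) / Δx

/-- Derivative trace `(c_x)⁺` at a vertical-edge Gauss point:
`(c_x)⁺_{i+1/2,β} = (c⁻_{i+3/2,β} - c⁺_{i+1/2,β})/Δx`. -/
def cxpV (c00 c10 c01 c11 : ℕ → ℕ → ℝ) (Δx : ℝ) (i j : ℕ) (β : Fin 2) : ℝ :=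
  (cmV c10 c11 (i + 1) j β - cpV c00 c01 i j β) / Δx

/-- Tangential derivative trace `(c_y)⁻` on a vertical edge:
`(√3/Δy)·(c⁻_{i+1/2,2} - c⁻_{i+1/2,1})` (the same for both Gauss points). -/
def cymV (c10 c11 : ℕ → ℕ → ℝ) (Δy : ℝ) (i j : ℕ) : ℝ :=
  (Real.sqrt 3 / Δy) * (cmV c10 c11 i j 1 - cmV c10 c11 i j 0)

/-- Tangential derivative trace `(c_y)⁺` on a vertical edge. -/
def cypV (c00 c01 : ℕ → ℕ → ℝ) (Δy : ℝ) (i j : ℕ) : ℝ :=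
  (Real.sqrt 3 / Δy) * (cpV c00 c01 i j 1 - cpV c00 c01 i j 0)

/-- Average `{D₁₁c_x + D₁₂c_y}` at a vertical-edge Gauss point. -/
def GxV (D11m D11p D12m D12p : ℕ → ℕ → Fin 2 → ℝ) (c00 c10 c01 c11 : ℕ → ℕ → ℝ)
    (Δx Δy : ℝ) (i j : ℕ) (β : Fin 2) : ℝ :=
  (D11m i j β * cxmV c00 c10 c01 c11 Δx i j β + D12m i j β * cymV c10 c11 Δy i j
    + D11p i j β * cxpV c00 c10 c01 c11 Δx i j β + D12p i j β * cypV c00 c01 Δy i j) / 2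

/-- x-diffusion part `H^d_x`. -/
def Hdx (D11m D11p D12m D12p : ℕ → ℕ → Fin 2 → ℝ) (Φ c00 c10 c01 c11 : ℕ → ℕ → ℝ)
    (αt Δx Δy Δt : ℝ) (i j : ℕ) : ℝ :=
  rbar Φ c00 c10 c01 c11 i j / 6
    - (Δt / Δx) * ∑ β : Fin 2, (1 / 2 : ℝ) *
        ((GxV D11m D11p D12m D12p c00 c10 c01 c11 Δx Δy (i - 1) j β
            + (αt / Δy) * jumpV c00 c10 c01 c11 (i - 1) j β)
          - (GxV D11m D11p D12m D12p c00 c10 c01 c11 Δx Δy i j β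
            + (αt / Δy) * jumpV c00 c10 c01 c11 i j β))

/-- Derivative trace `(c_y)⁻` at a horizontal-edge Gauss point. -/
def cymH (c00 c10 c01 c11 : ℕ → ℕ → ℝ) (Δy : ℝ) (i j : ℕ) (β : Fin 2) : ℝ :=
  (cmH c01 c11 i j β - cpH c00 c10 i (j - 1) β) / Δy

/-- Derivative trace `(c_y)⁺` at a horizontal-edge Gauss point. -/
def cypH (c00 c10 c01 c11 : ℕ → ℕ → ℝ) (Δy : ℝ) (i j : ℕ) (β : Fin 2) : ℝ :=
  (cmH c01 c11 i (j + 1) β - cpH c00 c10 i j β) / Δy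

/-- Tangential derivative trace `(c_x)⁻` on a horizontal edge. -/
def cxmH (c01 c11 : ℕ → ℕ → ℝ) (Δx : ℝ) (i j : ℕ) : ℝ :=
  (Real.sqrt 3 / Δx) * (cmH c01 c11 i j 1 - cmH c01 c11 i j 0)

/-- Tangential derivative trace `(c_x)⁺` on a horizontal edge. -/
def cxpH (c00 c10 : ℕ → ℕ → ℝ) (Δx : ℝ) (i j : ℕ) : ℝ :=
  (Real.sqrt 3 / Δx) * (cpH c00 c10 i j 1 - cpH c00 c10 i j 0)

/-- Average `{D₂₁c_x + D₂₂c_y}` at a horizontal-edge Gauss point. -/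
def GyH (D21m D21p D22m D22p : ℕ → ℕ → Fin 2 → ℝ) (c00 c10 c01 c11 : ℕ → ℕ → ℝ)
    (Δx Δy : ℝ) (i j : ℕ) (β : Fin 2) : ℝ :=
  (D21m i j β * cxmH c01 c11 Δx i j + D22m i j β * cymH c00 c10 c01 c11 Δy i j β
    + D21p i j β * cxpH c00 c10 Δx i j + D22p i j β * cypH c00 c10 c01 c11 Δy i j β) / 2

/-- y-diffusion part `H^d_y`. -/
def Hdy (D21m D21p D22m D22p : ℕ → ℕ → Fin 2 → ℝ) (Φ c00 c10 c01 c11 : ℕ → ℕ → ℝ)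
    (αt Δx Δy Δt : ℝ) (i j : ℕ) : ℝ :=
  rbar Φ c00 c10 c01 c11 i j / 6
    - (Δt / Δy) * ∑ β : Fin 2, (1 / 2 : ℝ) *
        ((GyH D21m D21p D22m D22p c00 c10 c01 c11 Δx Δy i (j - 1) β
            + (αt / Δx) * jumpH c00 c10 c01 c11 i (j - 1) β)
          - (GyH D21m D21p D22m D22p c00 c10 c01 c11 Δx Δy i j β
            + (αt / Δx) * jumpH c00 c10 c01 c11 i j β))

/-- Value of the bilinear function `c` at the interior Gauss point `(β,γ)` of cell `K_{ij}`. -/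
def cGP (c00 c10 c01 c11 : ℕ → ℕ → ℝ) (i j : ℕ) (β γ : Fin 2) : ℝ :=
  ga β (ga γ (c00 i j) (c01 i j)) (ga γ (c10 i j) (c11 i j))

/-- Value of the bilinear function `r = cΦ` at the interior Gauss point `(β,γ)` of `K_{ij}`. -/
def rGP (Φ c00 c10 c01 c11 : ℕ → ℕ → ℝ) (i j : ℕ) (β γ : Fin 2) : ℝ :=
  ga β (ga γ (c00 i j * Φ (i - 1) (j - 1)) (c01 i j * Φ (i - 1) j))
    (ga γ (c10 i j * Φ i (j - 1)) (c11 i j * Φ i j))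

/-- Value of the bilinear interpolant of `Φ` at the interior Gauss point `(β,γ)` of `K_{ij}`. -/
def phiGP (Φ : ℕ → ℕ → ℝ) (i j : ℕ) (β γ : Fin 2) : ℝ :=
  ga β (ga γ (Φ (i - 1) (j - 1)) (Φ (i - 1) j)) (ga γ (Φ i (j - 1)) (Φ i j))

/-- Source part `H^s_{ij}`. -/
def Hs (Φ c00 c10 c01 c11 : ℕ → ℕ → ℝ) (q ct P : ℕ → ℕ → Fin 2 → Fin 2 → ℝ)
    (z1 Δt : ℝ) (i j : ℕ) : ℝ :=
  rbar Φ c00 c10 c01 c11 i j / 3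
    + Δt * ∑ β : Fin 2, ∑ γ : Fin 2, (1 / 2 : ℝ) * (1 / 2 : ℝ) *
        (ct i j β γ * q i j β γ - z1 * rGP Φ c00 c10 c01 c11 i j β γ * P i j β γ)

/-- The Euler-forward cell-average update `r̄^{new}_{ij} = H^c + H^d_x + H^d_y + H^s`. -/
def rbarnew (u1 u2 D11m D11p D12m D12p D21m D21p D22m D22p : ℕ → ℕ → Fin 2 → ℝ)
    (Φ c00 c10 c01 c11 : ℕ → ℕ → ℝ) (q ct P : ℕ → ℕ → Fin 2 → Fin 2 → ℝ)
    (α αt z1 Δx Δy Δt : ℝ) (i j : ℕ) : ℝ :=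
  Hc u1 u2 Φ c00 c10 c01 c11 α Δx Δy Δt i j
    + Hdx D11m D11p D12m D12p Φ c00 c10 c01 c11 αt Δx Δy Δt i j
    + Hdy D21m D21p D22m D22p Φ c00 c10 c01 c11 αt Δx Δy Δt i j
    + Hs Φ c00 c10 c01 c11 q ct P z1 Δt i j

lemma sqrt3_nonneg : 0 ≤ Real.sqrt 3 := Real.sqrt_nonneg 3
lemma sqrt3_lt_2 : Real.sqrt 3 < 2 := by
  nlinarith [Real.sq_sqrt (show (0:ℝ) ≤ 3 by norm_num), Real.sqrt_nonneg 3]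
lemma mu1_pos : 0 < mu1 := by unfold mu1; nlinarith [sqrt3_nonneg]
lemma mu2_pos : 0 < mu2 := by unfold mu2; nlinarith [sqrt3_lt_2]
lemma mu_sum : mu1 + mu2 = 1 := by unfold mu1 mu2; ring

lemma ga_pos {a b : ℝ} (β : Fin 2) (ha : 0 < a) (hb : 0 < b) : 0 < ga β a b := by
  unfold ga; split <;> nlinarith [mu1_pos, mu2_pos]

lemma ga_nonneg {a b : ℝ} (β : Fin 2) (ha : 0 ≤ a) (hb : 0 ≤ b) : 0 ≤ ga β a b := by
  unfold ga; split <;> nlinarith [mu1_pos, mu2_pos]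

lemma ga_add (a b : ℝ) : ga 0 a b + ga 1 a b = a + b := by
  simp only [ga, mu1, mu2]
  norm_num
  ring

lemma ga_smul (β : Fin 2) (m a b : ℝ) : ga β (m*a) (m*b) = m * ga β a b := by
  unfold ga; split <;> ring

lemma ga_le_ga {a b a' b' : ℝ} (β : Fin 2) (h1 : a ≤ a') (h2 : b ≤ b') :
    ga β a b ≤ ga β a' b' := by
  unfold ga
  split
  · have h3 := mul_le_mul_of_nonneg_left h1 mu1_pos.le
    have h4 := mul_le_mul_of_nonneg_left h2 mu2_pos.le
    linarith
  · have h3 := mul_le_mul_of_nonneg_left h1 mu2_pos.le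
    have h4 := mul_le_mul_of_nonneg_left h2 mu1_pos.le
    linarith

lemma ga_mul_lower (β : Fin 2) (m p q a b : ℝ) (ha : 0 ≤ a) (hb : 0 ≤ b)
    (hp : m ≤ p) (hq : m ≤ q) : m * ga β a b ≤ ga β (a*p) (b*q) := by
  rw [← ga_smul]
  exact ga_le_ga β (by nlinarith) (by nlinarith)

lemma pb (x X a b : ℝ) (hx : |x| ≤ X) (ha : 0 ≤ a) (hb : 0 ≤ b) :
    -(X*(a+b)) ≤ x*(b-a) := by
  obtain ⟨h1, h2⟩ := abs_le.1 hx
  nlinarith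

lemma srcpt (Δt z1 r c Φm q ct P : ℝ) (hΔt : 0 < Δt) (hz1 : 0 ≤ z1)
    (hr : 0 < r) (hc : 0 < c) (hrc : Φm*c ≤ r) (hΦm : 0 < Φm)
    (hP : 6*Δt*z1*max P 0 ≤ 1)
    (hq1 : 0 ≤ q → 0 ≤ ct)
    (hq2 : q < 0 → ct = c ∧ 6*Δt*(-q) < Φm) :
    0 < r/3 + Δt*(ct*q - z1*r*P) := by
  have h1 : Δt*(z1*r*P) ≤ r/6 := by
    have h2 : z1*P ≤ z1*max P 0 := mul_le_mul_of_nonneg_left (le_max_left _ _) hz1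
    have h4 : Δt*(z1*P)*r ≤ Δt*(z1*max P 0)*r :=
      mul_le_mul_of_nonneg_right (mul_le_mul_of_nonneg_left h2 hΔt.le) hr.le
    have h3 : 6*Δt*z1*max P 0*r ≤ 1*r := mul_le_mul_of_nonneg_right hP hr.le
    nlinarith
  rcases lt_or_ge q 0 with hq | hq
  · obtain ⟨hct, hqm⟩ := hq2 hq
    have h5 : Δt*(-q)*c < (Φm/6)*c := mul_lt_mul_of_pos_right (by linarith) hc
    have h6 : (Φm/6)*c ≤ r/6 := by linarith
    rw [hct]
    nlinarith
  · have h6 : 0 ≤ Δt*(ct*q) := mul_nonneg hΔt.le (mul_nonneg (hq1 hq) hq)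
    nlinarith



lemma absHd (Δx Δy Δt αt D1M D2M : ℝ)
    (hΔx : 0 < Δx) (hΔy : 0 < Δy) (hΔt : 0 < Δt) (hαt : 0 < αt)
    (hαt1 : Δy/(2*Δx)*D1M + Real.sqrt 3 * D2M ≤ αt)
    (cA cB cC cD ΦA ΦB ΦC ΦD : ℝ)
    (hcA : 0 < cA) (hcB : 0 < cB) (hcC : 0 < cC) (hcD : 0 < cD)
    (hKA : D1M*(Δt/Δx^2) + 2*(αt + D2M)*(Δt/(Δx*Δy)) < ΦA/12)
    (hKB : D1M*(Δt/Δx^2) + 2*(αt + D2M)*(Δt/(Δx*Δy)) < ΦB/12)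
    (hKC : D1M*(Δt/Δx^2) + 2*(αt + D2M)*(Δt/(Δx*Δy)) < ΦC/12)
    (hKD : D1M*(Δt/Δx^2) + 2*(αt + D2M)*(Δt/(Δx*Δy)) < ΦD/12)
    (A0 A1 B0 B1 M0 M1 Q0 Q1 P0 P1 N0 N1 : ℝ)
    (hA0 : 0 ≤ A0) (hA1 : 0 ≤ A1) (hB0 : 0 ≤ B0) (hB1 : 0 ≤ B1)
    (hM0 : 0 ≤ M0) (hM1 : 0 ≤ M1) (hQ0 : 0 ≤ Q0) (hQ1 : 0 ≤ Q1)
    (hP0 : 0 ≤ P0) (hP1 : 0 ≤ P1) (hN0 : 0 ≤ N0) (hN1 : 0 ≤ N1)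
    (hAsum : A0 + A1 = cA + cC) (hBsum : B0 + B1 = cB + cD)
    (dm0 dm1 dp0 dp1 em0 em1 ep0 ep1 : ℝ)
    (hdm0 : 0 ≤ dm0 ∧ dm0 ≤ D1M) (hdm1 : 0 ≤ dm1 ∧ dm1 ≤ D1M)
    (hdp0 : 0 ≤ dp0 ∧ dp0 ≤ D1M) (hdp1 : 0 ≤ dp1 ∧ dp1 ≤ D1M)
    (hem0 : 0 ≤ em0 ∧ em0 ≤ D1M) (hem1 : 0 ≤ em1 ∧ em1 ≤ D1M)
    (hep0 : 0 ≤ ep0 ∧ ep0 ≤ D1M) (hep1 : 0 ≤ ep1 ∧ ep1 ≤ D1M)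
    (tm0 tm1 tp0 tp1 sm0 sm1 sp0 sp1 : ℝ)
    (htm0 : |tm0| ≤ D2M) (htm1 : |tm1| ≤ D2M)
    (htp0 : |tp0| ≤ D2M) (htp1 : |tp1| ≤ D2M)
    (hsm0 : |sm0| ≤ D2M) (hsm1 : |sm1| ≤ D2M)
    (hsp0 : |sp0| ≤ D2M) (hsp1 : |sp1| ≤ D2M) :
    0 < (cA*ΦA + cB*ΦB + cC*ΦC + cD*ΦD)/24
      - (Δt/Δx)*((1/2)*(((em0*((M0 - Q0)/Δx) + sm0*((Real.sqrt 3/Δy)*(M1 - M0)) + ep0*((B0 - A0)/Δx) + sp0*((Real.sqrt 3/Δy)*(A1 - A0)))/2 + (αt/Δy)*(A0 - M0))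
            - ((dm0*((B0 - A0)/Δx) + tm0*((Real.sqrt 3/Δy)*(B1 - B0)) + dp0*((N0 - P0)/Δx) + tp0*((Real.sqrt 3/Δy)*(P1 - P0)))/2 + (αt/Δy)*(P0 - B0)))
          + (1/2)*(((em1*((M1 - Q1)/Δx) + sm1*((Real.sqrt 3/Δy)*(M1 - M0)) + ep1*((B1 - A1)/Δx) + sp1*((Real.sqrt 3/Δy)*(A1 - A0)))/2 + (αt/Δy)*(A1 - M1))
            - ((dm1*((B1 - A1)/Δx) + tm1*((Real.sqrt 3/Δy)*(B1 - B0)) + dp1*((N1 - P1)/Δx) + tp1*((Real.sqrt 3/Δy)*(P1 - P0)))/2 + (αt/Δy)*(P1 - B1)))) := by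
  have h3 : 0 ≤ Real.sqrt 3 := Real.sqrt_nonneg 3
  have h3le : Real.sqrt 3 ≤ 2 := by
    nlinarith [Real.sq_sqrt (show (0:ℝ) ≤ 3 by norm_num), Real.sqrt_nonneg 3]
  have hD1M : 0 ≤ D1M := le_trans hdm0.1 hdm0.2
  have hD2M : 0 ≤ D2M := le_trans (abs_nonneg _) htm0
  obtain rfl : A1 = cA + cC - A0 := by linarith
  obtain rfl : B1 = cB + cD - B0 := by linarith
  have hdiv : D1M/Δx/2 + Real.sqrt 3*D2M/Δy ≤ αt/Δy := by
    have he : D1M/Δx/2 + Real.sqrt 3*D2M/Δy = (Δy/(2*Δx)*D1M + Real.sqrt 3*D2M)/Δy := by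
      field_simp
    rw [he]
    gcongr
  have habs : ∀ t0 t1 : ℝ, |t0| ≤ D2M → |t1| ≤ D2M →
      Real.sqrt 3*(t0 + t1)/Δy/4 ≤ Real.sqrt 3*(2*D2M)/Δy/4
      ∧ Real.sqrt 3*(-(2*D2M))/Δy/4 ≤ Real.sqrt 3*(t0 + t1)/Δy/4 := by
    intro t0 t1 h0 h1
    obtain ⟨h0a, h0b⟩ := abs_le.1 h0
    obtain ⟨h1a, h1b⟩ := abs_le.1 h1
    constructor
    · gcongr
      linarith
    · gcongr
      linarith
  have hdivle : ∀ d : ℝ, d ≤ D1M → d/Δx/4 ≤ D1M/Δx/4 := by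
    intro d hd; gcongr
  have htpB := habs tp0 tp1 htp0 htp1
  have hsmB := habs sm0 sm1 hsm0 hsm1
  have hk0 : 0 ≤ αt/Δy/2 - dp0/Δx/4 - Real.sqrt 3*(tp0+tp1)/Δy/4 := by
    have h1 := hdivle dp0 hdp0.2
    have h2 := htpB.1
    have h3' := hdiv
    ring_nf at h1 h2 h3' ⊢
    linarith
  have hk1 : 0 ≤ αt/Δy/2 - dp1/Δx/4 + Real.sqrt 3*(tp0+tp1)/Δy/4 := by
    have h1 := hdivle dp1 hdp1.2
    have h2 := htpB.2
    have h3' := hdiv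
    ring_nf at h1 h2 h3' ⊢
    linarith
  have hk0s : 0 ≤ αt/Δy/2 - em0/Δx/4 + Real.sqrt 3*(sm0+sm1)/Δy/4 := by
    have h1 := hdivle em0 hem0.2
    have h2 := hsmB.2
    have h3' := hdiv
    ring_nf at h1 h2 h3' ⊢
    linarith
  have hk1s : 0 ≤ αt/Δy/2 - em1/Δx/4 - Real.sqrt 3*(sm0+sm1)/Δy/4 := by
    have h1 := hdivle em1 hem1.2
    have h2 := hsmB.1
    have h3' := hdiv
    ring_nf at h1 h2 h3' ⊢
    linarith
  have hNR : 0 ≤ (Δt/Δx)*(dp0*N0/Δx/4 + dp1*N1/Δx/4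
      + (αt/Δy/2 - dp0/Δx/4 - Real.sqrt 3*(tp0+tp1)/Δy/4)*P0
      + (αt/Δy/2 - dp1/Δx/4 + Real.sqrt 3*(tp0+tp1)/Δy/4)*P1) := by
    apply mul_nonneg (by positivity)
    have n1 : 0 ≤ dp0*N0/Δx/4 := div_nonneg (div_nonneg (mul_nonneg hdp0.1 hN0) hΔx.le) (by norm_num)
    have n2 : 0 ≤ dp1*N1/Δx/4 := div_nonneg (div_nonneg (mul_nonneg hdp1.1 hN1) hΔx.le) (by norm_num)
    have n3 := mul_nonneg hk0 hP0
    have n4 := mul_nonneg hk1 hP1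
    ring_nf at n1 n2 n3 n4 ⊢
    linarith
  have hNL : 0 ≤ (Δt/Δx)*(em0*Q0/Δx/4 + em1*Q1/Δx/4
      + (αt/Δy/2 - em0/Δx/4 + Real.sqrt 3*(sm0+sm1)/Δy/4)*M0
      + (αt/Δy/2 - em1/Δx/4 - Real.sqrt 3*(sm0+sm1)/Δy/4)*M1) := by
    apply mul_nonneg (by positivity)
    have n1 : 0 ≤ em0*Q0/Δx/4 := div_nonneg (div_nonneg (mul_nonneg hem0.1 hQ0) hΔx.le) (by norm_num)
    have n2 : 0 ≤ em1*Q1/Δx/4 := div_nonneg (div_nonneg (mul_nonneg hem1.1 hQ1) hΔx.le) (by norm_num)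
    have n3 := mul_nonneg hk0s hM0
    have n4 := mul_nonneg hk1s hM1
    ring_nf at n1 n2 n3 n4 ⊢
    linarith
  have t1 : -(D1M*(A0+B0)) ≤ (dm0-ep0)*(B0-A0) :=
    pb _ _ _ _ (abs_le.mpr ⟨by linarith [hdm0.1, hep0.2], by linarith [hdm0.2, hep0.1]⟩) hA0 hB0
  have t2 : -(D1M*((cA + cC - A0)+(cB + cD - B0))) ≤ (dm1-ep1)*((cB + cD - B0)-(cA + cC - A0)) :=
    pb _ _ _ _ (abs_le.mpr ⟨by linarith [hdm1.1, hep1.2], by linarith [hdm1.2, hep1.1]⟩) hA1 hB1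
  have t3 : -(2*D2M*(B0+(cB + cD - B0))) ≤ (tm0+tm1)*((cB + cD - B0)-B0) :=
    pb _ _ _ _ (abs_le.mpr ⟨by linarith [abs_le.1 htm0, abs_le.1 htm1],
      by linarith [abs_le.1 htm0, abs_le.1 htm1]⟩) hB0 hB1
  have t4 : -(2*D2M*(A0+(cA + cC - A0))) ≤ (-(sp0+sp1))*((cA + cC - A0)-A0) :=
    pb _ _ _ _ (abs_le.mpr ⟨by linarith [abs_le.1 hsp0, abs_le.1 hsp1],
      by linarith [abs_le.1 hsp0, abs_le.1 hsp1]⟩) hA0 hA1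
  have u1 : (-(D1M*(A0+B0)) + -(D1M*((cA + cC - A0)+(cB + cD - B0))))/Δx/4
      ≤ ((dm0-ep0)*(B0-A0) + (dm1-ep1)*((cB + cD - B0)-(cA + cC - A0)))/Δx/4 := by
    gcongr <;> linarith
  have u2 : Real.sqrt 3*(-(2*D2M*(B0+(cB + cD - B0))) + -(2*D2M*(A0+(cA + cC - A0))))/Δy/4
      ≤ Real.sqrt 3*((tm0+tm1)*((cB + cD - B0)-B0) + (-(sp0+sp1))*((cA + cC - A0)-A0))/Δy/4 := by
    gcongr <;> linarith
  have inner : -(D1M*(cA+cB+cC+cD)/Δx/4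
        + Real.sqrt 3*(2*D2M*(cB+cD) + 2*D2M*(cA+cC))/Δy/4
        + αt/Δy/2*(cA+cB+cC+cD))
      ≤ ((dm0-ep0)*(B0-A0) + (dm1-ep1)*((cB + cD - B0)-(cA + cC - A0)))/Δx/4
        + Real.sqrt 3*((tm0+tm1)*((cB + cD - B0)-B0) + (-(sp0+sp1))*((cA + cC - A0)-A0))/Δy/4
        - αt/Δy/2*(cA+cB+cC+cD) := by
    ring_nf at u1 u2 ⊢
    linarith
  have hOP := mul_le_mul_of_nonneg_left inner (le_of_lt (show (0:ℝ) < Δt/Δx by positivity))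
  have hs3 : Real.sqrt 3*D2M*(Δt/(Δx*Δy)) ≤ 2*D2M*(Δt/(Δx*Δy)) :=
    mul_le_mul_of_nonneg_right (mul_le_mul_of_nonneg_right h3le hD2M) (by positivity)
  have hnn1 : 0 ≤ D1M*(Δt/Δx^2) := mul_nonneg hD1M (by positivity)
  have hnn2 : 0 ≤ αt*(Δt/(Δx*Δy)) := by positivity
  have hcoef : ∀ Φk : ℝ, (D1M*(Δt/Δx^2) + 2*(αt + D2M)*(Δt/(Δx*Δy)) < Φk/12) →
      (Δt/Δx)*(D1M/Δx/4 + Real.sqrt 3*D2M/Δy/2 + αt/Δy/2) < Φk/24 := by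
    intro Φk hK
    have he : (Δt/Δx)*(D1M/Δx/4 + Real.sqrt 3*D2M/Δy/2 + αt/Δy/2)
        = D1M*(Δt/Δx^2)/4 + Real.sqrt 3*D2M*(Δt/(Δx*Δy))/2 + αt*(Δt/(Δx*Δy))/2 := by
      field_simp
    rw [he]; linarith [hs3, hnn1, hnn2]
  have mKA := mul_lt_mul_of_pos_right (hcoef ΦA hKA) hcA
  have mKB := mul_lt_mul_of_pos_right (hcoef ΦB hKB) hcB
  have mKC := mul_lt_mul_of_pos_right (hcoef ΦC hKC) hcC
  have mKD := mul_lt_mul_of_pos_right (hcoef ΦD hKD) hcD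
  ring_nf at hNR hNL hOP mKA mKB mKC mKD ⊢
  linarith


lemma absHc (Δx Δy Δt α μ ν : ℝ)
    (hΔx : 0 < Δx) (hΔy : 0 < Δy) (hΔt : 0 < Δt) (hα : 0 < α)
    (hμ : 0 ≤ μ) (hν : 0 ≤ ν) (hμν : μ + ν = 1)
    (cA cB cC cD ΦA ΦB ΦC ΦD : ℝ)
    (hcA : 0 < cA) (hcB : 0 < cB) (hcC : 0 < cC) (hcD : 0 < cD)
    (A0 A1 B0 B1 C0 C1 D0 D1 ML0 ML1 PR0 PR1 MB0 MB1 PT0 PT1 : ℝ)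
    (hA0 : A0 = μ*cA + ν*cC) (hA1 : A1 = ν*cA + μ*cC)
    (hB0 : B0 = μ*cB + ν*cD) (hB1 : B1 = ν*cB + μ*cD)
    (hC0 : C0 = μ*cA + ν*cB) (hC1 : C1 = ν*cA + μ*cB)
    (hD0 : D0 = μ*cC + ν*cD) (hD1 : D1 = ν*cC + μ*cD)
    (hML0 : 0 < ML0) (hML1 : 0 < ML1) (hPR0 : 0 < PR0) (hPR1 : 0 < PR1)
    (hMB0 : 0 < MB0) (hMB1 : 0 < MB1) (hPT0 : 0 < PT0) (hPT1 : 0 < PT1)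
    (uL0 uL1 uR0 uR1 uB0 uB1 uT0 uT1 : ℝ)
    (huL0 : uL0 < α) (huL1 : uL1 < α) (huR0 : uR0 < α) (huR1 : uR1 < α)
    (huB0 : uB0 < α) (huB1 : uB1 < α) (huT0 : uT0 < α) (huT1 : uT1 < α)
    (hΦA : Δt/Δx + Δt/Δy ≤ ΦA/(6*α)) (hΦB : Δt/Δx + Δt/Δy ≤ ΦB/(6*α))
    (hΦC : Δt/Δx + Δt/Δy ≤ ΦC/(6*α)) (hΦD : Δt/Δx + Δt/Δy ≤ ΦD/(6*α))
    (hL0A : Δt/Δx + Δt/Δy ≤ ΦA/(6*(α - uL0))) (hL0C : Δt/Δx + Δt/Δy ≤ ΦC/(6*(α - uL0)))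
    (hL1A : Δt/Δx + Δt/Δy ≤ ΦA/(6*(α - uL1))) (hL1C : Δt/Δx + Δt/Δy ≤ ΦC/(6*(α - uL1)))
    (hB0A : Δt/Δx + Δt/Δy ≤ ΦA/(6*(α - uB0))) (hB0B : Δt/Δx + Δt/Δy ≤ ΦB/(6*(α - uB0)))
    (hB1A : Δt/Δx + Δt/Δy ≤ ΦA/(6*(α - uB1))) (hB1B : Δt/Δx + Δt/Δy ≤ ΦB/(6*(α - uB1))) :
    0 < (cA*ΦA + cB*ΦB + cC*ΦC + cD*ΦD)/12
      + (Δt/Δx)*((1/2)*((uL0*A0 - α*(A0 - ML0)) - (uR0*PR0 - α*(PR0 - B0)))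
               + (1/2)*((uL1*A1 - α*(A1 - ML1)) - (uR1*PR1 - α*(PR1 - B1))))
      + (Δt/Δy)*((1/2)*((uB0*C0 - α*(C0 - MB0)) - (uT0*PT0 - α*(PT0 - D0)))
               + (1/2)*((uB1*C1 - α*(C1 - MB1)) - (uT1*PT1 - α*(PT1 - D1)))) := by
  subst hA0 hA1 hB0 hB1 hC0 hC1 hD0 hD1
  obtain rfl : ν = 1 - μ := by linarith
  have hsx : 0 < Δt/Δx := by positivity
  have hsy : 0 < Δt/Δy := by positivity
  have hs : 0 < Δt/Δx + Δt/Δy := by positivity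
  -- conversion of CFL hypotheses
  have cv : ∀ k Φk : ℝ, 0 < k → (Δt/Δx + Δt/Δy ≤ Φk/(6*k)) → k*(Δt/Δx + Δt/Δy) ≤ Φk/6 := by
    intro k Φk hk h
    rw [le_div_iff₀ (by positivity)] at h
    rw [le_div_iff₀ (by norm_num : (0:ℝ) < 6)]
    nlinarith
  have kA := cv α ΦA hα hΦA
  have kB := cv α ΦB hα hΦB
  have kC := cv α ΦC hα hΦC
  have kD := cv α ΦD hα hΦD
  have kL0A := cv (α - uL0) ΦA (by linarith) hL0A
  have kL0C := cv (α - uL0) ΦC (by linarith) hL0C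
  have kL1A := cv (α - uL1) ΦA (by linarith) hL1A
  have kL1C := cv (α - uL1) ΦC (by linarith) hL1C
  have kB0A := cv (α - uB0) ΦA (by linarith) hB0A
  have kB0B := cv (α - uB0) ΦB (by linarith) hB0B
  have kB1A := cv (α - uB1) ΦA (by linarith) hB1A
  have kB1B := cv (α - uB1) ΦB (by linarith) hB1B
  -- per-corner coefficient bounds
  have coefA : (Δt/Δx)*((α - uL0)*μ + (α - uL1)*(1-μ)) + (Δt/Δy)*((α - uB0)*μ + (α - uB1)*(1-μ)) ≤ ΦA/6 := by
    have h1 := mul_le_mul_of_nonneg_left kL0A (mul_nonneg hμ hsx.le)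
    have h2 := mul_le_mul_of_nonneg_left kL1A (mul_nonneg hν hsx.le)
    have h3 := mul_le_mul_of_nonneg_left kB0A (mul_nonneg hμ hsy.le)
    have h4 := mul_le_mul_of_nonneg_left kB1A (mul_nonneg hν hsy.le)
    have key : ((Δt/Δx)*((α - uL0)*μ + (α - uL1)*(1-μ)) + (Δt/Δy)*((α - uB0)*μ + (α - uB1)*(1-μ)))*(Δt/Δx + Δt/Δy)
        ≤ (ΦA/6)*(Δt/Δx + Δt/Δy) := by linarith [h1, h2, h3, h4]
    exact le_of_mul_le_mul_right key hs
  have coefB : (Δt/Δx)*(α*μ + α*(1-μ)) + (Δt/Δy)*((α - uB0)*(1-μ) + (α - uB1)*μ) ≤ ΦB/6 := by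
    have h1 := mul_le_mul_of_nonneg_left kB (mul_nonneg hμ hsx.le)
    have h2 := mul_le_mul_of_nonneg_left kB (mul_nonneg hν hsx.le)
    have h3 := mul_le_mul_of_nonneg_left kB0B (mul_nonneg hν hsy.le)
    have h4 := mul_le_mul_of_nonneg_left kB1B (mul_nonneg hμ hsy.le)
    have key : ((Δt/Δx)*(α*μ + α*(1-μ)) + (Δt/Δy)*((α - uB0)*(1-μ) + (α - uB1)*μ))*(Δt/Δx + Δt/Δy)
        ≤ (ΦB/6)*(Δt/Δx + Δt/Δy) := by linarith [h1, h2, h3, h4]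
    exact le_of_mul_le_mul_right key hs
  have coefC : (Δt/Δx)*((α - uL0)*(1-μ) + (α - uL1)*μ) + (Δt/Δy)*(α*μ + α*(1-μ)) ≤ ΦC/6 := by
    have h1 := mul_le_mul_of_nonneg_left kL0C (mul_nonneg hν hsx.le)
    have h2 := mul_le_mul_of_nonneg_left kL1C (mul_nonneg hμ hsx.le)
    have h3 := mul_le_mul_of_nonneg_left kC (mul_nonneg hμ hsy.le)
    have h4 := mul_le_mul_of_nonneg_left kC (mul_nonneg hν hsy.le)
    have key : ((Δt/Δx)*((α - uL0)*(1-μ) + (α - uL1)*μ) + (Δt/Δy)*(α*μ + α*(1-μ)))*(Δt/Δx + Δt/Δy)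
        ≤ (ΦC/6)*(Δt/Δx + Δt/Δy) := by linarith [h1, h2, h3, h4]
    exact le_of_mul_le_mul_right key hs
  have coefD : (Δt/Δx)*α + (Δt/Δy)*α ≤ ΦD/6 := by linarith [kD]
  have mA := mul_le_mul_of_nonneg_right coefA hcA.le
  have mB := mul_le_mul_of_nonneg_right coefB hcB.le
  have mC := mul_le_mul_of_nonneg_right coefC hcC.le
  have mD := mul_le_mul_of_nonneg_right coefD hcD.le
  -- positive neighbor part
  have e1 := mul_pos hα hML0
  have e2 := mul_pos hα hML1
  have e3 := mul_pos (sub_pos.2 huR0) hPR0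
  have e4 := mul_pos (sub_pos.2 huR1) hPR1
  have e5 := mul_pos hα hMB0
  have e6 := mul_pos hα hMB1
  have e7 := mul_pos (sub_pos.2 huT0) hPT0
  have e8 := mul_pos (sub_pos.2 huT1) hPT1
  have hPOS : 0 < (Δt/Δx)*((1/2)*(α*ML0 + α*ML1 + (α - uR0)*PR0 + (α - uR1)*PR1))
      + (Δt/Δy)*((1/2)*(α*MB0 + α*MB1 + (α - uT0)*PT0 + (α - uT1)*PT1)) := by
    have p1 : 0 < (1/2)*(α*ML0 + α*ML1 + (α - uR0)*PR0 + (α - uR1)*PR1) := by linarith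
    have p2 : 0 < (1/2)*(α*MB0 + α*MB1 + (α - uT0)*PT0 + (α - uT1)*PT1) := by linarith
    linarith [mul_pos hsx p1, mul_pos hsy p2]
  linarith [mA, mB, mC, mD, hPOS]



set_option maxHeartbeats 4000000

lemma cGP_pos {c00 c10 c01 c11 : ℕ → ℕ → ℝ} {i j : ℕ} (β γ : Fin 2)
    (h00 : 0 < c00 i j) (h10 : 0 < c10 i j) (h01 : 0 < c01 i j) (h11 : 0 < c11 i j) :
    0 < cGP c00 c10 c01 c11 i j β γ :=
  ga_pos β (ga_pos γ h00 h01) (ga_pos γ h10 h11)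

lemma rGP_lower (Φ c00 c10 c01 c11 : ℕ → ℕ → ℝ) (i j : ℕ) (β γ : Fin 2) (m : ℝ)
    (h00 : 0 ≤ c00 i j) (h10 : 0 ≤ c10 i j) (h01 : 0 ≤ c01 i j) (h11 : 0 ≤ c11 i j)
    (hm00 : m ≤ Φ (i-1) (j-1)) (hm10 : m ≤ Φ i (j-1))
    (hm01 : m ≤ Φ (i-1) j) (hm11 : m ≤ Φ i j) :
    m * cGP c00 c10 c01 c11 i j β γ ≤ rGP Φ c00 c10 c01 c11 i j β γ := by
  unfold cGP rGP
  calc m * ga β (ga γ (c00 i j) (c01 i j)) (ga γ (c10 i j) (c11 i j))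
      = ga β (m * ga γ (c00 i j) (c01 i j)) (m * ga γ (c10 i j) (c11 i j)) :=
        (ga_smul β m _ _).symm
    _ ≤ _ := ga_le_ga β
        (le_trans (ga_mul_lower γ m _ _ _ _ h00 h01 hm00 hm01) (le_refl _))
        (le_trans (ga_mul_lower γ m _ _ _ _ h10 h11 hm10 hm11) (le_refl _))

lemma rGP_sum (Φ c00 c10 c01 c11 : ℕ → ℕ → ℝ) (i j : ℕ) :
    rGP Φ c00 c10 c01 c11 i j 0 0 + rGP Φ c00 c10 c01 c11 i j 0 1
      + rGP Φ c00 c10 c01 c11 i j 1 0 + rGP Φ c00 c10 c01 c11 i j 1 1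
    = c00 i j * Φ (i-1) (j-1) + c10 i j * Φ i (j-1) + c01 i j * Φ (i-1) j + c11 i j * Φ i j := by
  simp only [rGP, ga, mu1, mu2]
  norm_num
  ring

/-- Theorem 3.3 (2D): positivity of the Euler-forward cell-average update
`r̄^{new}_{ij} = H^c + H^d_x + H^d_y + H^s` for every interior cell. -/
theorem positivity_of_cell_averages_2d
    (Nx Ny : ℕ) (hNx : 4 ≤ Nx) (hNy : 4 ≤ Ny) (Δx Δy Δt : ℝ)
    (hΔx : 0 < Δx) (hΔy : 0 < Δy) (hΔt : 0 < Δt)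
    (Φ c00 c10 c01 c11 : ℕ → ℕ → ℝ)
    (u1 u2 D11m D11p D12m D12p D21m D21p D22m D22p : ℕ → ℕ → Fin 2 → ℝ)
    (q ct P : ℕ → ℕ → Fin 2 → Fin 2 → ℝ) (α αt z1 D11M D12M D22M D21M : ℝ)
    (hΦ : ∀ i j, i ≤ Nx → j ≤ Ny → 0 < Φ i j)
    -- (i) all corner concentration values of all cells strictly positive
    (hc : ∀ i j, 1 ≤ i → i ≤ Nx → 1 ≤ j → j ≤ Ny →
      0 < c00 i j ∧ 0 < c10 i j ∧ 0 < c01 i j ∧ 0 < c11 i j)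
    -- (ii) convection conditions
    (hα0 : 0 < α)
    (hα1 : ∀ i j, 1 ≤ i → i ≤ Nx - 1 → 1 ≤ j → j ≤ Ny → ∀ β : Fin 2, u1 i j β < α)
    (hα2 : ∀ i j, 1 ≤ i → i ≤ Nx → 1 ≤ j → j ≤ Ny - 1 → ∀ β : Fin 2, u2 i j β < α)
    (hCFL0 : ∀ i j, i ≤ Nx → j ≤ Ny → Δt / Δx + Δt / Δy ≤ Φ i j / (6 * α))
    (hCFL1 : ∀ i j, 1 ≤ i → i ≤ Nx - 1 → 1 ≤ j → j ≤ Ny → ∀ β : Fin 2,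
      Δt / Δx + Δt / Δy ≤ Φ i (j - 1) / (6 * (α - u1 i j β)) ∧
      Δt / Δx + Δt / Δy ≤ Φ i j / (6 * (α - u1 i j β)))
    (hCFL2 : ∀ i j, 1 ≤ i → i ≤ Nx → 1 ≤ j → j ≤ Ny - 1 → ∀ β : Fin 2,
      Δt / Δx + Δt / Δy ≤ Φ (i - 1) j / (6 * (α - u2 i j β)) ∧
      Δt / Δx + Δt / Δy ≤ Φ i j / (6 * (α - u2 i j β)))
    -- (iii) diffusion conditions
    (hD11 : ∀ i j, 1 ≤ i → i ≤ Nx - 1 → 1 ≤ j → j ≤ Ny → ∀ β : Fin 2,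
      (0 ≤ D11m i j β ∧ D11m i j β ≤ D11M) ∧ (0 ≤ D11p i j β ∧ D11p i j β ≤ D11M))
    (hD12 : ∀ i j, 1 ≤ i → i ≤ Nx - 1 → 1 ≤ j → j ≤ Ny → ∀ β : Fin 2,
      |D12m i j β| ≤ D12M ∧ |D12p i j β| ≤ D12M)
    (hD22 : ∀ i j, 1 ≤ i → i ≤ Nx → 1 ≤ j → j ≤ Ny - 1 → ∀ β : Fin 2,
      (0 ≤ D22m i j β ∧ D22m i j β ≤ D22M) ∧ (0 ≤ D22p i j β ∧ D22p i j β ≤ D22M))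
    (hD21 : ∀ i j, 1 ≤ i → i ≤ Nx → 1 ≤ j → j ≤ Ny - 1 → ∀ β : Fin 2,
      |D21m i j β| ≤ D21M ∧ |D21p i j β| ≤ D21M)
    (hαt0 : 0 < αt)
    (hαt1 : (Δy / (2 * Δx)) * D11M + Real.sqrt 3 * D12M ≤ αt)
    (hαt2 : (Δx / (2 * Δy)) * D22M + Real.sqrt 3 * D21M ≤ αt)
    (hCFL3 : ∀ i j, i ≤ Nx → j ≤ Ny →
      D11M * (Δt / Δx ^ 2) + 2 * (αt + D12M) * (Δt / (Δx * Δy)) < Φ i j / 12)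
    (hCFL4 : ∀ i j, i ≤ Nx → j ≤ Ny →
      D22M * (Δt / Δy ^ 2) + 2 * (αt + D21M) * (Δt / (Δx * Δy)) < Φ i j / 12)
    -- (iv) source conditions
    (hz1 : 0 ≤ z1)
    (hP : ∀ i j, 1 ≤ i → i ≤ Nx → 1 ≤ j → j ≤ Ny → ∀ β γ : Fin 2,
      6 * Δt * z1 * max (P i j β γ) 0 ≤ 1)
    (hq1 : ∀ i j, 1 ≤ i → i ≤ Nx → 1 ≤ j → j ≤ Ny → ∀ β γ : Fin 2,
      0 ≤ q i j β γ → 0 ≤ ct i j β γ)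
    (hq2 : ∀ i j, 1 ≤ i → i ≤ Nx → 1 ≤ j → j ≤ Ny → ∀ β γ : Fin 2,
      q i j β γ < 0 →
        ct i j β γ = cGP c00 c10 c01 c11 i j β γ ∧
        6 * Δt * (-q i j β γ)
          < min (min (Φ (i - 1) (j - 1)) (Φ i (j - 1))) (min (Φ (i - 1) j) (Φ i j))) :
    ∀ i j, 2 ≤ i → i ≤ Nx - 1 → 2 ≤ j → j ≤ Ny - 1 →
      0 < rbarnew u1 u2 D11m D11p D12m D12p D21m D21p D22m D22p
            Φ c00 c10 c01 c11 q ct P α αt z1 Δx Δy Δt i j := by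
  intro i j hi2 hiN hj2 hjN
  obtain ⟨a, rfl⟩ : ∃ a, i = a + 2 := ⟨i - 2, by omega⟩
  obtain ⟨b, rfl⟩ : ∃ b, j = b + 2 := ⟨j - 2, by omega⟩
  obtain ⟨o00, o10, o01, o11⟩ := hc (a+2) (b+2) (by omega) (by omega) (by omega) (by omega)
  obtain ⟨l00, l10, l01, l11⟩ := hc (a+1) (b+2) (by omega) (by omega) (by omega) (by omega)
  obtain ⟨r00, r10, r01, r11⟩ := hc (a+3) (b+2) (by omega) (by omega) (by omega) (by omega)
  obtain ⟨d00, d10, d01, d11⟩ := hc (a+2) (b+1) (by omega) (by omega) (by omega) (by omega)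
  obtain ⟨t00, t10, t01, t11⟩ := hc (a+2) (b+3) (by omega) (by omega) (by omega) (by omega)
  have pA : 0 < Φ (a+1) (b+1) := hΦ _ _ (by omega) (by omega)
  have pB : 0 < Φ (a+2) (b+1) := hΦ _ _ (by omega) (by omega)
  have pC : 0 < Φ (a+1) (b+2) := hΦ _ _ (by omega) (by omega)
  have pD : 0 < Φ (a+2) (b+2) := hΦ _ _ (by omega) (by omega)
  have hHc : 0 < Hc u1 u2 Φ c00 c10 c01 c11 α Δx Δy Δt (a+2) (b+2) := by
    have key := absHc Δx Δy Δt α mu1 mu2 hΔx hΔy hΔt hα0 mu1_pos.le mu2_pos.le mu_sum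
      (c00 (a+2) (b+2)) (c10 (a+2) (b+2)) (c01 (a+2) (b+2)) (c11 (a+2) (b+2))
      (Φ (a+1) (b+1)) (Φ (a+2) (b+1)) (Φ (a+1) (b+2)) (Φ (a+2) (b+2))
      o00 o10 o01 o11
      (cpV c00 c01 (a+1) (b+2) 0) (cpV c00 c01 (a+1) (b+2) 1)
      (cmV c10 c11 (a+2) (b+2) 0) (cmV c10 c11 (a+2) (b+2) 1)
      (cpH c00 c10 (a+2) (b+1) 0) (cpH c00 c10 (a+2) (b+1) 1)
      (cmH c01 c11 (a+2) (b+2) 0) (cmH c01 c11 (a+2) (b+2) 1)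
      (cmV c10 c11 (a+1) (b+2) 0) (cmV c10 c11 (a+1) (b+2) 1)
      (cpV c00 c01 (a+2) (b+2) 0) (cpV c00 c01 (a+2) (b+2) 1)
      (cmH c01 c11 (a+2) (b+1) 0) (cmH c01 c11 (a+2) (b+1) 1)
      (cpH c00 c10 (a+2) (b+2) 0) (cpH c00 c10 (a+2) (b+2) 1)
      rfl rfl rfl rfl rfl rfl rfl rfl
      (ga_pos 0 l10 l11) (ga_pos 1 l10 l11)
      (ga_pos 0 r00 r01) (ga_pos 1 r00 r01)
      (ga_pos 0 d01 d11) (ga_pos 1 d01 d11)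
      (ga_pos 0 t00 t10) (ga_pos 1 t00 t10)
      (u1 (a+1) (b+2) 0) (u1 (a+1) (b+2) 1) (u1 (a+2) (b+2) 0) (u1 (a+2) (b+2) 1)
      (u2 (a+2) (b+1) 0) (u2 (a+2) (b+1) 1) (u2 (a+2) (b+2) 0) (u2 (a+2) (b+2) 1)
      (hα1 (a+1) (b+2) (by omega) (by omega) (by omega) (by omega) 0)
      (hα1 (a+1) (b+2) (by omega) (by omega) (by omega) (by omega) 1)
      (hα1 (a+2) (b+2) (by omega) (by omega) (by omega) (by omega) 0)
      (hα1 (a+2) (b+2) (by omega) (by omega) (by omega) (by omega) 1)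
      (hα2 (a+2) (b+1) (by omega) (by omega) (by omega) (by omega) 0)
      (hα2 (a+2) (b+1) (by omega) (by omega) (by omega) (by omega) 1)
      (hα2 (a+2) (b+2) (by omega) (by omega) (by omega) (by omega) 0)
      (hα2 (a+2) (b+2) (by omega) (by omega) (by omega) (by omega) 1)
      (hCFL0 (a+1) (b+1) (by omega) (by omega)) (hCFL0 (a+2) (b+1) (by omega) (by omega))
      (hCFL0 (a+1) (b+2) (by omega) (by omega)) (hCFL0 (a+2) (b+2) (by omega) (by omega))
      (hCFL1 (a+1) (b+2) (by omega) (by omega) (by omega) (by omega) 0).1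
      (hCFL1 (a+1) (b+2) (by omega) (by omega) (by omega) (by omega) 0).2
      (hCFL1 (a+1) (b+2) (by omega) (by omega) (by omega) (by omega) 1).1
      (hCFL1 (a+1) (b+2) (by omega) (by omega) (by omega) (by omega) 1).2
      (hCFL2 (a+2) (b+1) (by omega) (by omega) (by omega) (by omega) 0).1
      (hCFL2 (a+2) (b+1) (by omega) (by omega) (by omega) (by omega) 0).2
      (hCFL2 (a+2) (b+1) (by omega) (by omega) (by omega) (by omega) 1).1
      (hCFL2 (a+2) (b+1) (by omega) (by omega) (by omega) (by omega) 1).2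
    simp only [Hc, uc1, uc2, rbar, Fin.sum_univ_two,
      show a+2-1 = a+1 from rfl, show b+2-1 = b+1 from rfl]
    ring_nf at key ⊢
    linarith [key]
  have hHdx : 0 < Hdx D11m D11p D12m D12p Φ c00 c10 c01 c11 αt Δx Δy Δt (a+2) (b+2) := by
    have key := absHd Δx Δy Δt αt D11M D12M hΔx hΔy hΔt hαt0 hαt1
      (c00 (a+2) (b+2)) (c10 (a+2) (b+2)) (c01 (a+2) (b+2)) (c11 (a+2) (b+2))
      (Φ (a+1) (b+1)) (Φ (a+2) (b+1)) (Φ (a+1) (b+2)) (Φ (a+2) (b+2))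
      o00 o10 o01 o11
      (hCFL3 (a+1) (b+1) (by omega) (by omega)) (hCFL3 (a+2) (b+1) (by omega) (by omega))
      (hCFL3 (a+1) (b+2) (by omega) (by omega)) (hCFL3 (a+2) (b+2) (by omega) (by omega))
      (cpV c00 c01 (a+1) (b+2) 0) (cpV c00 c01 (a+1) (b+2) 1)
      (cmV c10 c11 (a+2) (b+2) 0) (cmV c10 c11 (a+2) (b+2) 1)
      (cmV c10 c11 (a+1) (b+2) 0) (cmV c10 c11 (a+1) (b+2) 1)
      (cpV c00 c01 a (b+2) 0) (cpV c00 c01 a (b+2) 1)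
      (cpV c00 c01 (a+2) (b+2) 0) (cpV c00 c01 (a+2) (b+2) 1)
      (cmV c10 c11 (a+3) (b+2) 0) (cmV c10 c11 (a+3) (b+2) 1)
      (ga_pos 0 o00 o01).le (ga_pos 1 o00 o01).le
      (ga_pos 0 o10 o11).le (ga_pos 1 o10 o11).le
      (ga_pos 0 l10 l11).le (ga_pos 1 l10 l11).le
      (ga_pos 0 l00 l01).le (ga_pos 1 l00 l01).le
      (ga_pos 0 r00 r01).le (ga_pos 1 r00 r01).le
      (ga_pos 0 r10 r11).le (ga_pos 1 r10 r11).le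
      (ga_add _ _) (ga_add _ _)
      (D11m (a+2) (b+2) 0) (D11m (a+2) (b+2) 1) (D11p (a+2) (b+2) 0) (D11p (a+2) (b+2) 1)
      (D11m (a+1) (b+2) 0) (D11m (a+1) (b+2) 1) (D11p (a+1) (b+2) 0) (D11p (a+1) (b+2) 1)
      (hD11 (a+2) (b+2) (by omega) (by omega) (by omega) (by omega) 0).1
      (hD11 (a+2) (b+2) (by omega) (by omega) (by omega) (by omega) 1).1
      (hD11 (a+2) (b+2) (by omega) (by omega) (by omega) (by omega) 0).2
      (hD11 (a+2) (b+2) (by omega) (by omega) (by omega) (by omega) 1).2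
      (hD11 (a+1) (b+2) (by omega) (by omega) (by omega) (by omega) 0).1
      (hD11 (a+1) (b+2) (by omega) (by omega) (by omega) (by omega) 1).1
      (hD11 (a+1) (b+2) (by omega) (by omega) (by omega) (by omega) 0).2
      (hD11 (a+1) (b+2) (by omega) (by omega) (by omega) (by omega) 1).2
      (D12m (a+2) (b+2) 0) (D12m (a+2) (b+2) 1) (D12p (a+2) (b+2) 0) (D12p (a+2) (b+2) 1)
      (D12m (a+1) (b+2) 0) (D12m (a+1) (b+2) 1) (D12p (a+1) (b+2) 0) (D12p (a+1) (b+2) 1)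
      (hD12 (a+2) (b+2) (by omega) (by omega) (by omega) (by omega) 0).1
      (hD12 (a+2) (b+2) (by omega) (by omega) (by omega) (by omega) 1).1
      (hD12 (a+2) (b+2) (by omega) (by omega) (by omega) (by omega) 0).2
      (hD12 (a+2) (b+2) (by omega) (by omega) (by omega) (by omega) 1).2
      (hD12 (a+1) (b+2) (by omega) (by omega) (by omega) (by omega) 0).1
      (hD12 (a+1) (b+2) (by omega) (by omega) (by omega) (by omega) 1).1
      (hD12 (a+1) (b+2) (by omega) (by omega) (by omega) (by omega) 0).2
      (hD12 (a+1) (b+2) (by omega) (by omega) (by omega) (by omega) 1).2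
    simp only [Hdx, GxV, cxmV, cxpV, cymV, cypV, jumpV, rbar, Fin.sum_univ_two,
      show a+2-1 = a+1 from rfl, show b+2-1 = b+1 from rfl,
      show a+1-1 = a from rfl, show a+2+1 = a+3 from rfl]
    ring_nf at key ⊢
    linarith [key]
  have hHdy : 0 < Hdy D21m D21p D22m D22p Φ c00 c10 c01 c11 αt Δx Δy Δt (a+2) (b+2) := by
    have k4A : D22M*(Δt/Δy^2) + 2*(αt + D21M)*(Δt/(Δy*Δx)) < Φ (a+1) (b+1)/12 := by
      have h := hCFL4 (a+1) (b+1) (by omega) (by omega); rw [mul_comm Δx Δy] at h; exact h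
    have k4B : D22M*(Δt/Δy^2) + 2*(αt + D21M)*(Δt/(Δy*Δx)) < Φ (a+1) (b+2)/12 := by
      have h := hCFL4 (a+1) (b+2) (by omega) (by omega); rw [mul_comm Δx Δy] at h; exact h
    have k4C : D22M*(Δt/Δy^2) + 2*(αt + D21M)*(Δt/(Δy*Δx)) < Φ (a+2) (b+1)/12 := by
      have h := hCFL4 (a+2) (b+1) (by omega) (by omega); rw [mul_comm Δx Δy] at h; exact h
    have k4D : D22M*(Δt/Δy^2) + 2*(αt + D21M)*(Δt/(Δy*Δx)) < Φ (a+2) (b+2)/12 := by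
      have h := hCFL4 (a+2) (b+2) (by omega) (by omega); rw [mul_comm Δx Δy] at h; exact h
    have key := absHd Δy Δx Δt αt D22M D21M hΔy hΔx hΔt hαt0 hαt2
      (c00 (a+2) (b+2)) (c01 (a+2) (b+2)) (c10 (a+2) (b+2)) (c11 (a+2) (b+2))
      (Φ (a+1) (b+1)) (Φ (a+1) (b+2)) (Φ (a+2) (b+1)) (Φ (a+2) (b+2))
      o00 o01 o10 o11
      k4A k4B k4C k4D
      (cpH c00 c10 (a+2) (b+1) 0) (cpH c00 c10 (a+2) (b+1) 1)
      (cmH c01 c11 (a+2) (b+2) 0) (cmH c01 c11 (a+2) (b+2) 1)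
      (cmH c01 c11 (a+2) (b+1) 0) (cmH c01 c11 (a+2) (b+1) 1)
      (cpH c00 c10 (a+2) b 0) (cpH c00 c10 (a+2) b 1)
      (cpH c00 c10 (a+2) (b+2) 0) (cpH c00 c10 (a+2) (b+2) 1)
      (cmH c01 c11 (a+2) (b+3) 0) (cmH c01 c11 (a+2) (b+3) 1)
      (ga_pos 0 o00 o10).le (ga_pos 1 o00 o10).le
      (ga_pos 0 o01 o11).le (ga_pos 1 o01 o11).le
      (ga_pos 0 d01 d11).le (ga_pos 1 d01 d11).le
      (ga_pos 0 d00 d10).le (ga_pos 1 d00 d10).le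
      (ga_pos 0 t00 t10).le (ga_pos 1 t00 t10).le
      (ga_pos 0 t01 t11).le (ga_pos 1 t01 t11).le
      (ga_add _ _) (ga_add _ _)
      (D22m (a+2) (b+2) 0) (D22m (a+2) (b+2) 1) (D22p (a+2) (b+2) 0) (D22p (a+2) (b+2) 1)
      (D22m (a+2) (b+1) 0) (D22m (a+2) (b+1) 1) (D22p (a+2) (b+1) 0) (D22p (a+2) (b+1) 1)
      (hD22 (a+2) (b+2) (by omega) (by omega) (by omega) (by omega) 0).1
      (hD22 (a+2) (b+2) (by omega) (by omega) (by omega) (by omega) 1).1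
      (hD22 (a+2) (b+2) (by omega) (by omega) (by omega) (by omega) 0).2
      (hD22 (a+2) (b+2) (by omega) (by omega) (by omega) (by omega) 1).2
      (hD22 (a+2) (b+1) (by omega) (by omega) (by omega) (by omega) 0).1
      (hD22 (a+2) (b+1) (by omega) (by omega) (by omega) (by omega) 1).1
      (hD22 (a+2) (b+1) (by omega) (by omega) (by omega) (by omega) 0).2
      (hD22 (a+2) (b+1) (by omega) (by omega) (by omega) (by omega) 1).2
      (D21m (a+2) (b+2) 0) (D21m (a+2) (b+2) 1) (D21p (a+2) (b+2) 0) (D21p (a+2) (b+2) 1)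
      (D21m (a+2) (b+1) 0) (D21m (a+2) (b+1) 1) (D21p (a+2) (b+1) 0) (D21p (a+2) (b+1) 1)
      (hD21 (a+2) (b+2) (by omega) (by omega) (by omega) (by omega) 0).1
      (hD21 (a+2) (b+2) (by omega) (by omega) (by omega) (by omega) 1).1
      (hD21 (a+2) (b+2) (by omega) (by omega) (by omega) (by omega) 0).2
      (hD21 (a+2) (b+2) (by omega) (by omega) (by omega) (by omega) 1).2
      (hD21 (a+2) (b+1) (by omega) (by omega) (by omega) (by omega) 0).1
      (hD21 (a+2) (b+1) (by omega) (by omega) (by omega) (by omega) 1).1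
      (hD21 (a+2) (b+1) (by omega) (by omega) (by omega) (by omega) 0).2
      (hD21 (a+2) (b+1) (by omega) (by omega) (by omega) (by omega) 1).2
    simp only [Hdy, GyH, cymH, cypH, cxmH, cxpH, jumpH, rbar, Fin.sum_univ_two,
      show a+2-1 = a+1 from rfl, show b+2-1 = b+1 from rfl,
      show b+1-1 = b from rfl, show b+2+1 = b+3 from rfl]
    ring_nf at key ⊢
    linarith [key]
  have hHs : 0 < Hs Φ c00 c10 c01 c11 q ct P z1 Δt (a+2) (b+2) := by
    have hΦm : 0 < min (min (Φ (a+1) (b+1)) (Φ (a+2) (b+1))) (min (Φ (a+1) (b+2)) (Φ (a+2) (b+2))) :=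
      lt_min (lt_min pA pB) (lt_min pC pD)
    have hmA : min (min (Φ (a+1) (b+1)) (Φ (a+2) (b+1))) (min (Φ (a+1) (b+2)) (Φ (a+2) (b+2))) ≤ Φ (a+1) (b+1) :=
      le_trans (min_le_left _ _) (min_le_left _ _)
    have hmB : min (min (Φ (a+1) (b+1)) (Φ (a+2) (b+1))) (min (Φ (a+1) (b+2)) (Φ (a+2) (b+2))) ≤ Φ (a+2) (b+1) :=
      le_trans (min_le_left _ _) (min_le_right _ _)
    have hmC : min (min (Φ (a+1) (b+1)) (Φ (a+2) (b+1))) (min (Φ (a+1) (b+2)) (Φ (a+2) (b+2))) ≤ Φ (a+1) (b+2) :=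
      le_trans (min_le_right _ _) (min_le_left _ _)
    have hmD : min (min (Φ (a+1) (b+1)) (Φ (a+2) (b+1))) (min (Φ (a+1) (b+2)) (Φ (a+2) (b+2))) ≤ Φ (a+2) (b+2) :=
      le_trans (min_le_right _ _) (min_le_right _ _)
    have hsp : ∀ β γ : Fin 2,
        0 < rGP Φ c00 c10 c01 c11 (a+2) (b+2) β γ / 3
          + Δt*(ct (a+2) (b+2) β γ * q (a+2) (b+2) β γ
              - z1 * rGP Φ c00 c10 c01 c11 (a+2) (b+2) β γ * P (a+2) (b+2) β γ) := by
      intro β γ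
      have hrc := rGP_lower Φ c00 c10 c01 c11 (a+2) (b+2) β γ
        (min (min (Φ (a+1) (b+1)) (Φ (a+2) (b+1))) (min (Φ (a+1) (b+2)) (Φ (a+2) (b+2))))
        o00.le o10.le o01.le o11.le hmA hmB hmC hmD
      have hcp := cGP_pos β γ o00 o10 o01 o11
      exact srcpt Δt z1 _ _ _ _ _ _ hΔt hz1
        (lt_of_lt_of_le (mul_pos hΦm hcp) hrc) hcp hrc hΦm
        (hP (a+2) (b+2) (by omega) (by omega) (by omega) (by omega) β γ)
        (hq1 (a+2) (b+2) (by omega) (by omega) (by omega) (by omega) β γ)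
        (hq2 (a+2) (b+2) (by omega) (by omega) (by omega) (by omega) β γ)
    have s00 := hsp 0 0
    have s01 := hsp 0 1
    have s10 := hsp 1 0
    have s11 := hsp 1 1
    have hrsum := rGP_sum Φ c00 c10 c01 c11 (a+2) (b+2)
    simp only [show a+2-1 = a+1 from rfl, show b+2-1 = b+1 from rfl] at hrsum
    simp only [Hs, rbar, Fin.sum_univ_two,
      show a+2-1 = a+1 from rfl, show b+2-1 = b+1 from rfl]
    ring_nf at s00 s01 s10 s11 hrsum ⊢
    linarith [s00, s01, s10, s11, hrsum]
  simp only [rbarnew]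
  exact add_pos (add_pos (add_pos hHc hHdx) hHdy) hHs


end DG2D
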